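/- Let 1 ≤ i < r/2, and let S, S' ⊆ U have signatures x, x' with respect to P that are both i-balanced (i.e., x_i − g/8 ≤ x_j ≤ x_i + g/8 for all i < j ≤ r, and likewise for x'), satisfy x_j = x'_j for all j ≤ i, and have Σ_{j=1}^{r} x_j = Σ_{j=1}^{r} x'_j. Then (a) rk_{M_odd}(S) = rk_{M_odd}(S'), and (b) rk_{M_even}(S) = rk_{M_even}(S') = rk_{M'_even}(S) = rk_{M'_even}(S'). -/

import Mathlib

/-- Independence in the nested matroid defined by a partition `Q 1, …, Q m` and integer
thresholds `σ 1, …, σ m`: a set `I` is independent iff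
`Σ_{s=t}^m |I ∩ Q s| ≤ Σ_{s=t}^m σ s` for all `1 ≤ t ≤ m`. -/
def NIndep {α : Type*} [DecidableEq α] (m : ℕ) (Q : ℕ → Finset α) (σ : ℕ → ℤ)
    (I : Finset α) : Prop :=
  ∀ t ∈ Finset.Icc 1 m,
    (∑ s ∈ Finset.Icc t m, ((I ∩ Q s).card : ℤ)) ≤ ∑ s ∈ Finset.Icc t m, σ s

/-- The rank of `S` with respect to an independence predicate: the maximum cardinality of
an independent subset of `S`. -/
noncomputable def nrank {α : Type*} (pred : Finset α → Prop) (S : Finset α) : ℕ :=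
  sSup {c : ℕ | ∃ I : Finset α, I ⊆ S ∧ pred I ∧ I.card = c}

/-- `B` is a base (maximal independent set) for the independence predicate `pred`. -/
def IsNBase {α : Type*} (pred : Finset α → Prop) (B : Finset α) : Prop :=
  pred B ∧ ∀ B' : Finset α, pred B' → B ⊆ B' → B' = B

/-- The thresholds `τ_1 = ⋯ = τ_{r−1} = n/2 − g` and `τ_r = n/2 − g + gr/4`, for
`r = 2k+1`. -/
def tauF (n g k : ℕ) : ℕ → ℤ :=
  fun t => if t = 2 * k + 1 then (n : ℤ) / 2 - (g : ℤ) + ((g : ℤ) * (2 * (k : ℤ) + 1)) / 4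
    else (n : ℤ) / 2 - (g : ℤ)

/-- `θ = n/2 − g/4`. -/
def thetaF (n g : ℕ) : ℤ := (n : ℤ) / 2 - (g : ℤ) / 4

/-- `ℓ_t(x) = Σ_{s=t}^{2k+1} (x_s − τ_s)`. -/
def ellT (n g k : ℕ) (x : ℕ → ℤ) (t : ℕ) : ℤ :=
  ∑ s ∈ Finset.Icc t (2 * k + 1), (x s - tauF n g k s)

/-- The signature of `S` with respect to the partition `P`. -/
def sigF {α : Type*} [DecidableEq α] (P : ℕ → Finset α) (S : Finset α) : ℕ → ℤ :=
  fun j => ((S ∩ P j).card : ℤ)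

/-- The partition of `M_odd`: `(P_1 ∪ P_2, P_3 ∪ P_4, …, P_{r−2} ∪ P_{r−1}, P_r)`,
indexed `1, …, k+1`. -/
def QoddF {α : Type*} [DecidableEq α] (P : ℕ → Finset α) (k : ℕ) : ℕ → Finset α :=
  fun j => if j ≤ k then P (2 * j - 1) ∪ P (2 * j) else P (2 * k + 1)

/-- The thresholds of `M_odd`: `(τ_1 + τ_2, τ_3 + τ_4, …, τ_{r−2} + τ_{r−1}, τ_r)`. -/
def soddF (n g k : ℕ) : ℕ → ℤ :=
  fun j => if j ≤ k then tauF n g k (2 * j - 1) + tauF n g k (2 * j)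
    else tauF n g k (2 * k + 1)

/-- The partition of `M_even`: `(P_1, P_2 ∪ P_3, P_4 ∪ P_5, …, P_{r−1} ∪ P_r)`,
indexed `1, …, k+1`. -/
def QevenF {α : Type*} [DecidableEq α] (P : ℕ → Finset α) (k : ℕ) : ℕ → Finset α :=
  fun j => if j = 1 then P 1 else P (2 * j - 2) ∪ P (2 * j - 1)

/-- The thresholds of `M_even`: `(n, τ_2 + τ_3, τ_4 + τ_5, …, τ_{r−1} + τ_r)`. -/
def sevenF (n g k : ℕ) : ℕ → ℤ :=
  fun j => if j = 1 then (n : ℤ) else tauF n g k (2 * j - 2) + tauF n g k (2 * j - 1)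

/-- The partition of `M'_even`:
`(P_1, P_2 ∪ P_3, …, P_{r−3} ∪ P_{r−2}, P_{r−1}, P_r)`, indexed `1, …, k+2`. -/
def QevenF' {α : Type*} [DecidableEq α] (P : ℕ → Finset α) (k : ℕ) : ℕ → Finset α :=
  fun j => if j = 1 then P 1
    else if j ≤ k then P (2 * j - 2) ∪ P (2 * j - 1)
    else if j = k + 1 then P (2 * k)
    else P (2 * k + 1)

/-- The thresholds of `M'_even`:
`(n, τ_2 + τ_3, …, τ_{r−3} + τ_{r−2}, τ_{r−1} + τ_r − θ, θ)`. -/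
def sevenF' (n g k : ℕ) : ℕ → ℤ :=
  fun j => if j = 1 then (n : ℤ)
    else if j ≤ k then tauF n g k (2 * j - 2) + tauF n g k (2 * j - 1)
    else if j = k + 1 then tauF n g k (2 * k) + tauF n g k (2 * k + 1) - thetaF n g
    else thetaF n g

/-- `x` is `i`-balanced: `x_i − g/8 ≤ x_j ≤ x_i + g/8` for all `i < j ≤ r`
(stated multiplied through by `8`). -/
def iBal (g r i : ℕ) (x : ℕ → ℤ) : Prop :=
  ∀ j : ℕ, i < j → j ≤ r → 8 * (x i - x j) ≤ (g : ℤ) ∧ 8 * (x j - x i) ≤ (g : ℤ)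


def Fval (m : ℕ) (σ a : ℕ → ℤ) (t : ℕ) : ℤ :=
  (∑ s ∈ Finset.Ico 1 t, a s) + ∑ s ∈ Finset.Icc t m, σ s

def Bval (m : ℕ) (σ : ℕ → ℤ) (t : ℕ) : ℤ := ∑ s ∈ Finset.Icc t m, σ s

def zfun (m : ℕ) (σ a : ℕ → ℤ) : ℕ → ℤ := fun t =>
  Nat.rec 0 (fun j w => min (a (m - j) + w) (Bval m σ (m - j))) (m + 1 - t)

lemma zfun_top (m : ℕ) (σ a : ℕ → ℤ) (t : ℕ) (h : m + 1 ≤ t) : zfun m σ a t = 0 := by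
  simp [zfun, Nat.sub_eq_zero_of_le h]

lemma zfun_succ (m : ℕ) (σ a : ℕ → ℤ) (t : ℕ) (h : t ≤ m) :
    zfun m σ a t = min (a t + zfun m σ a (t + 1)) (Bval m σ t) := by
  have h1 : m + 1 - t = (m - t) + 1 := by omega
  have h2 : m - (m - t) = t := by omega
  have h3 : m + 1 - (t + 1) = m - t := by omega
  simp only [zfun, h1, h3, h2]

lemma Bval_top (m : ℕ) (σ : ℕ → ℤ) (t : ℕ) (h : m < t) : Bval m σ t = 0 := by
  simp [Bval, Finset.Icc_eq_empty_of_lt h]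

lemma Bval_succ (m : ℕ) (σ : ℕ → ℤ) (t : ℕ) (h : t ≤ m) :
    Bval m σ t = σ t + Bval m σ (t + 1) := by
  unfold Bval
  rw [← Finset.Ico_add_one_right_eq_Icc, ← Finset.Ico_add_one_right_eq_Icc,
    Finset.sum_eq_sum_Ico_succ_bot (by omega)]

lemma Bval_nonneg (m : ℕ) (σ : ℕ → ℤ) (hσ : ∀ s, 1 ≤ s → s ≤ m → 0 ≤ σ s)
    (t : ℕ) (ht : 1 ≤ t) : 0 ≤ Bval m σ t := by
  apply Finset.sum_nonneg
  intro s hs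
  simp only [Finset.mem_Icc] at hs
  exact hσ s (by omega) hs.2

section ZFacts
variable (m : ℕ) (σ a : ℕ → ℤ)

lemma zfun_le_Bval (ha : ∀ s, 0 ≤ a s) (t : ℕ) : zfun m σ a t ≤ Bval m σ t := by
  rcases le_or_gt t m with h | h
  · rw [zfun_succ m σ a t h]; exact min_le_right _ _
  · rw [zfun_top m σ a t (by omega), Bval_top m σ t h]

lemma zfun_nonneg (hσ : ∀ s, 1 ≤ s → s ≤ m → 0 ≤ σ s) (ha : ∀ s, 0 ≤ a s) :
    ∀ j t, 1 ≤ t → m + 1 - t = j → 0 ≤ zfun m σ a t := by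
  intro j
  induction j with
  | zero => intro t ht hj; rw [zfun_top m σ a t (by omega)]
  | succ j ih =>
    intro t ht hj
    rw [zfun_succ m σ a t (by omega)]
    exact le_min (add_nonneg (ha t) (ih (t+1) (by omega) (by omega)))
      (Bval_nonneg m σ hσ t ht)

/-- z t ≤ every tail candidate -/
lemma zfun_le_cand (hσ : ∀ s, 1 ≤ s → s ≤ m → 0 ≤ σ s) (ha : ∀ s, 0 ≤ a s) :
    ∀ j t, 1 ≤ t → m + 1 - t = j → ∀ t', t ≤ t' → t' ≤ m + 1 →
      zfun m σ a t ≤ (∑ s ∈ Finset.Ico t t', a s) + Bval m σ t' := by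
  intro j
  induction j with
  | zero =>
    intro t ht hj t' htt' ht'
    have h1 : t' = t := by omega
    subst h1
    rw [zfun_top m σ a t' (by omega), Finset.Ico_self, Finset.sum_empty, zero_add]
    exact Bval_nonneg m σ hσ t' ht
  | succ j ih =>
    intro t ht hj t' htt' ht'
    rcases eq_or_lt_of_le htt' with h | h
    · subst h
      rw [Finset.Ico_self, Finset.sum_empty, zero_add, zfun_succ m σ a t (by omega)]
      exact min_le_right _ _
    · rw [zfun_succ m σ a t (by omega)]
      calc min (a t + zfun m σ a (t+1)) (Bval m σ t)
          ≤ a t + zfun m σ a (t+1) := min_le_left _ _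
        _ ≤ a t + ((∑ s ∈ Finset.Ico (t+1) t', a s) + Bval m σ t') := by
            have := ih (t+1) (by omega) (by omega) t' (by omega) ht'
            linarith
        _ = (∑ s ∈ Finset.Ico t t', a s) + Bval m σ t' := by
            rw [Finset.sum_eq_sum_Ico_succ_bot (by omega : t < t') a]
            ring

lemma zfun_cand_exists :
    ∀ j t, 1 ≤ t → t ≤ m + 1 → m + 1 - t = j →
      ∃ t', t ≤ t' ∧ t' ≤ m + 1 ∧
        (∑ s ∈ Finset.Ico t t', a s) + Bval m σ t' ≤ zfun m σ a t := by
  intro j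
  induction j with
  | zero =>
    intro t ht ht2 hj
    have htm : m + 1 ≤ t := by omega
    refine ⟨t, le_refl _, by omega, ?_⟩
    rw [zfun_top m σ a t htm, Bval_top m σ t (by omega), Finset.Ico_self,
      Finset.sum_empty]
    norm_num
  | succ j ih =>
    intro t ht ht2 hj
    have htm : t ≤ m := by omega
    rcases le_total (Bval m σ t) (a t + zfun m σ a (t+1)) with h | h
    · refine ⟨t, le_refl _, by omega, ?_⟩
      rw [zfun_succ m σ a t htm, Finset.Ico_self, Finset.sum_empty, zero_add,
        min_eq_right h]
    · obtain ⟨t', h1, h2, h3⟩ := ih (t+1) (by omega) (by omega) (by omega)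
      refine ⟨t', by omega, h2, ?_⟩
      rw [zfun_succ m σ a t htm, Finset.sum_eq_sum_Ico_succ_bot (by omega : t < t') a,
        min_eq_left h]
      linarith

/-- suffix sums of y equal z, by telescoping -/
lemma zfun_telescope (t : ℕ) (ht : t ≤ m + 1) :
    (∑ s ∈ Finset.Ico t (m+1), (zfun m σ a s - zfun m σ a (s+1))) = zfun m σ a t := by
  have h0 : zfun m σ a (m+1) = 0 := zfun_top m σ a (m+1) (le_refl _)
  have key : ∀ N, (∑ s ∈ Finset.range N, (zfun m σ a s - zfun m σ a (s+1)))
      = zfun m σ a 0 - zfun m σ a N := by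
    intro N
    induction N with
    | zero => simp
    | succ N ihN => rw [Finset.sum_range_succ, ihN]; ring
  rw [Finset.sum_Ico_eq_sub _ ht, key, key, h0]
  ring

end ZFacts

section Main
variable {α : Type*} [DecidableEq α]

lemma card_as_sum (m : ℕ) (Q : ℕ → Finset α) (S I : Finset α)
    (hQd : ∀ s ∈ Finset.Icc 1 m, ∀ s' ∈ Finset.Icc 1 m, s ≠ s' → Disjoint (Q s) (Q s'))
    (hQc : ∀ a ∈ S, ∃ s ∈ Finset.Icc 1 m, a ∈ Q s) (hI : I ⊆ S) :
    (I.card : ℤ) = ∑ s ∈ Finset.Icc 1 m, ((I ∩ Q s).card : ℤ) := by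
  have hI2 : I = (Finset.Icc 1 m).biUnion (fun s => I ∩ Q s) := by
    ext a
    simp only [Finset.mem_biUnion, Finset.mem_inter]
    constructor
    · intro ha
      obtain ⟨s, hs, hsa⟩ := hQc a (hI ha)
      exact ⟨s, hs, ha, hsa⟩
    · rintro ⟨s, _, ha, _⟩; exact ha
  rw [show (I.card : ℤ) = ((((Finset.Icc 1 m).biUnion (fun s => I ∩ Q s)).card : ℕ) : ℤ) by rw [← hI2]]
  rw [Finset.card_biUnion]
  · push_cast; rfl
  · intro s hs s' hs' hne
    exact Finset.disjoint_of_subset_left Finset.inter_subset_right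
      (Finset.disjoint_of_subset_right Finset.inter_subset_right (hQd s hs s' hs' hne))

lemma indep_card_le (m : ℕ) (Q : ℕ → Finset α) (σ : ℕ → ℤ) (S I : Finset α)
    (hQd : ∀ s ∈ Finset.Icc 1 m, ∀ s' ∈ Finset.Icc 1 m, s ≠ s' → Disjoint (Q s) (Q s'))
    (hQc : ∀ a ∈ S, ∃ s ∈ Finset.Icc 1 m, a ∈ Q s)
    (hI : I ⊆ S) (hind : NIndep m Q σ I) (t : ℕ) (ht1 : 1 ≤ t) (ht2 : t ≤ m + 1) :
    (I.card : ℤ) ≤ Fval m σ (fun s => ((S ∩ Q s).card : ℤ)) t := by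
  rw [card_as_sum m Q S I hQd hQc hI]
  have hsplit : ∑ s ∈ Finset.Icc 1 m, ((I ∩ Q s).card : ℤ)
      = (∑ s ∈ Finset.Ico 1 t, ((I ∩ Q s).card : ℤ))
        + ∑ s ∈ Finset.Icc t m, ((I ∩ Q s).card : ℤ) := by
    rw [← Finset.Ico_add_one_right_eq_Icc, ← Finset.Ico_add_one_right_eq_Icc,
      ← Finset.sum_Ico_consecutive _ ht1 ht2]
  rw [hsplit]
  unfold Fval
  apply add_le_add
  · apply Finset.sum_le_sum
    intro s _
    exact_mod_cast Finset.card_le_card (Finset.inter_subset_inter_right hI)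
  · rcases le_or_gt t m with h | h
    · exact hind t (Finset.mem_Icc.mpr ⟨ht1, h⟩)
    · rw [Finset.Icc_eq_empty_of_lt h]; simp
end Main


theorem nrank_eq_min {α : Type*} [DecidableEq α] (m : ℕ) (hm : 1 ≤ m)
    (Q : ℕ → Finset α) (σ : ℕ → ℤ) (S : Finset α)
    (hQd : ∀ s ∈ Finset.Icc 1 m, ∀ s' ∈ Finset.Icc 1 m, s ≠ s' → Disjoint (Q s) (Q s'))
    (hQc : ∀ a ∈ S, ∃ s ∈ Finset.Icc 1 m, a ∈ Q s)
    (hσ : ∀ s, 1 ≤ s → s ≤ m → 0 ≤ σ s) :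
    nrank (NIndep m Q σ) S
      = (((Finset.Icc 1 (m+1)).image (Fval m σ (fun s => ((S ∩ Q s).card : ℤ)))).min'
          ((Finset.nonempty_Icc.mpr (by omega)).image _)).toNat := by
  classical
  set a : ℕ → ℤ := fun s => ((S ∩ Q s).card : ℤ) with ha_def
  have ha : ∀ s, 0 ≤ a s := fun s => Int.natCast_nonneg _
  have hFval : ∀ t, Fval m σ a t = (∑ s ∈ Finset.Ico 1 t, a s) + Bval m σ t := fun t => rfl
  -- the candidate minimum
  set R := ((Finset.Icc 1 (m+1)).image (Fval m σ a)).min'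
      ((Finset.nonempty_Icc.mpr (by omega : 1 ≤ m + 1)).image _) with hR_def
  set z1 := zfun m σ a 1 with hz1_def
  have hz1nn : 0 ≤ z1 := zfun_nonneg m σ a hσ ha m 1 le_rfl (by omega)
  have hle : ∀ t' ∈ Finset.Icc 1 (m+1), z1 ≤ Fval m σ a t' := by
    intro t' ht'
    rw [Finset.mem_Icc] at ht'
    rw [hFval]
    exact zfun_le_cand m σ a hσ ha m 1 le_rfl (by omega) t' ht'.1 ht'.2
  have hex : ∃ t' ∈ Finset.Icc 1 (m+1), Fval m σ a t' ≤ z1 := by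
    obtain ⟨t', h1, h2, h3⟩ := zfun_cand_exists m σ a m 1 le_rfl (by omega) (by omega)
    exact ⟨t', Finset.mem_Icc.mpr ⟨h1, h2⟩, by rw [hFval]; exact h3⟩
  have hz1R : z1 = R := by
    apply le_antisymm
    · apply Finset.le_min'
      intro y hy
      obtain ⟨t', ht', rfl⟩ := Finset.mem_image.mp hy
      exact hle t' ht'
    · obtain ⟨t', ht', h3⟩ := hex
      exact le_trans (Finset.min'_le _ _ (Finset.mem_image_of_mem _ ht')) h3
  -- construct the witness independent set
  set y : ℕ → ℤ := fun s => zfun m σ a s - zfun m σ a (s+1) with hy_def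
  have hy0 : ∀ s, 1 ≤ s → s ≤ m → 0 ≤ y s := by
    intro s h1 h2
    have hz2 : zfun m σ a (s+1) ≤ Bval m σ s := by
      calc zfun m σ a (s+1) ≤ Bval m σ (s+1) := zfun_le_Bval m σ a ha (s+1)
        _ ≤ Bval m σ s := by rw [Bval_succ m σ s h2]; linarith [hσ s h1 h2]
    have := zfun_succ m σ a s h2
    simp only [hy_def]
    have h3 : zfun m σ a (s+1) ≤ min (a s + zfun m σ a (s+1)) (Bval m σ s) :=
      le_min (by linarith [ha s]) hz2
    omega
  have hya : ∀ s, 1 ≤ s → s ≤ m → y s ≤ a s := by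
    intro s h1 h2
    have := zfun_succ m σ a s h2
    have h3 : min (a s + zfun m σ a (s+1)) (Bval m σ s) ≤ a s + zfun m σ a (s+1) :=
      min_le_left _ _
    simp only [hy_def]
    omega
  have hsumy : ∀ t, 1 ≤ t → t ≤ m + 1 →
      (∑ s ∈ Finset.Icc t m, y s) = zfun m σ a t := by
    intro t h1 h2
    rw [← Finset.Ico_add_one_right_eq_Icc]
    exact zfun_telescope m σ a t h2
  have hchoice : ∀ s : ℕ, ∃ C : Finset α, C ⊆ S ∩ Q s ∧
      ((1 ≤ s ∧ s ≤ m) → (C.card : ℤ) = y s) := by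
    intro s
    rcases Classical.em (1 ≤ s ∧ s ≤ m) with h | h
    · have h1 : (y s).toNat ≤ (S ∩ Q s).card := by
        have h2 : y s ≤ ((S ∩ Q s).card : ℤ) := hya s h.1 h.2
        have h3 := hy0 s h.1 h.2
        omega
      obtain ⟨C, hC1, hC2⟩ := Finset.exists_subset_card_eq h1
      refine ⟨C, hC1, fun _ => ?_⟩
      rw [hC2]
      exact Int.toNat_of_nonneg (hy0 s h.1 h.2)
    · exact ⟨∅, Finset.empty_subset _, fun hh => absurd hh h⟩
  choose C hC1 hC2 using hchoice
  set I : Finset α := (Finset.Icc 1 m).biUnion C with hI_def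
  have hIS : I ⊆ S := by
    apply Finset.biUnion_subset.mpr
    intro s _
    exact (hC1 s).trans Finset.inter_subset_left
  have hIQ : ∀ s ∈ Finset.Icc 1 m, I ∩ Q s = C s := by
    intro s hs
    ext b
    simp only [hI_def, Finset.mem_inter, Finset.mem_biUnion]
    constructor
    · rintro ⟨⟨s', hs', hbs'⟩, hbQ⟩
      rcases Classical.em (s' = s) with rfl | hne
      · exact hbs'
      · exfalso
        have hbQ' : b ∈ Q s' := (Finset.mem_inter.mp ((hC1 s') hbs')).2
        exact Finset.disjoint_left.mp (hQd s' hs' s hs hne) hbQ' hbQ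
    · intro hb
      exact ⟨⟨s, hs, hb⟩, (Finset.mem_inter.mp ((hC1 s) hb)).2⟩
  have hCd : ∀ s ∈ Finset.Icc 1 m, ∀ s' ∈ Finset.Icc 1 m, s ≠ s' → Disjoint (C s) (C s') := by
    intro s hs s' hs' hne
    apply Finset.disjoint_of_subset_left ((hC1 s).trans Finset.inter_subset_right)
    apply Finset.disjoint_of_subset_right ((hC1 s').trans Finset.inter_subset_right)
    exact hQd s hs s' hs' hne
  have hIcard : (I.card : ℤ) = z1 := by
    rw [hI_def, Finset.card_biUnion (fun s hs s' hs' hne => hCd s hs s' hs' hne)]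
    push_cast
    rw [hz1_def, ← hsumy 1 le_rfl (by omega)]
    apply Finset.sum_congr rfl
    intro s hs
    rw [Finset.mem_Icc] at hs
    exact hC2 s hs
  have hInd : NIndep m Q σ I := by
    intro t ht
    rw [Finset.mem_Icc] at ht
    have heq : (∑ s ∈ Finset.Icc t m, ((I ∩ Q s).card : ℤ)) = ∑ s ∈ Finset.Icc t m, y s := by
      apply Finset.sum_congr rfl
      intro s hs
      rw [Finset.mem_Icc] at hs
      rw [hIQ s (Finset.mem_Icc.mpr ⟨by omega, hs.2⟩)]
      exact hC2 s ⟨by omega, hs.2⟩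
    rw [heq, hsumy t ht.1 (by omega)]
    exact zfun_le_Bval m σ a ha t
  -- compute nrank
  have hmem : I.card ∈ {c : ℕ | ∃ I' : Finset α, I' ⊆ S ∧ NIndep m Q σ I' ∧ I'.card = c} :=
    ⟨I, hIS, hInd, rfl⟩
  have hub : ∀ c ∈ {c : ℕ | ∃ I' : Finset α, I' ⊆ S ∧ NIndep m Q σ I' ∧ I'.card = c},
      c ≤ I.card := by
    rintro c ⟨I', hI'S, hI'ind, rfl⟩
    obtain ⟨t', ht', h3⟩ := hex
    rw [Finset.mem_Icc] at ht'
    have := indep_card_le m Q σ S I' hQd hQc hI'S hI'ind t' ht'.1 ht'.2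
    have h5 : (I'.card : ℤ) ≤ (I.card : ℤ) := by rw [hIcard]; exact le_trans this h3
    exact_mod_cast h5
  have hnr : nrank (NIndep m Q σ) S = I.card := by
    unfold nrank
    apply le_antisymm
    · exact csSup_le ⟨I.card, hmem⟩ hub
    · exact le_csSup ⟨I.card, hub⟩ hmem
  rw [hnr]
  have hIR : (I.card : ℤ) = R := by rw [hIcard, hz1R]
  omega

def Tsum (r : ℕ) (x : ℕ → ℤ) : ℤ := ∑ j ∈ Finset.Icc 1 r, x j
def Lsum (r : ℕ) (c : ℤ) (x : ℕ → ℤ) (s : ℕ) : ℤ := ∑ j ∈ Finset.Icc s r, (c - x j)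

lemma Lsum_split (r : ℕ) (c : ℤ) (x : ℕ → ℤ) (s s' : ℕ) (h1 : s ≤ s') (h2 : s' ≤ r + 1) :
    Lsum r c x s = (∑ j ∈ Finset.Ico s s', (c - x j)) + Lsum r c x s' := by
  unfold Lsum
  rw [← Finset.Ico_add_one_right_eq_Icc, ← Finset.Ico_add_one_right_eq_Icc,
    ← Finset.sum_Ico_consecutive _ h1 h2]

lemma Icc_sum_split (r : ℕ) (y : ℕ → ℤ) (s : ℕ) (h1 : 1 ≤ s) (h2 : s ≤ r + 1) :
    (∑ j ∈ Finset.Icc 1 r, y j) = (∑ j ∈ Finset.Ico 1 s, y j) + ∑ j ∈ Finset.Icc s r, y j := by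
  rw [← Finset.Ico_add_one_right_eq_Icc, ← Finset.Ico_add_one_right_eq_Icc, ← Finset.sum_Ico_consecutive _ h1 h2]

lemma Lsum_det (x x' : ℕ → ℤ) (c : ℤ) (r i : ℕ) (hir : i ≤ r)
    (hagree : ∀ j, 1 ≤ j → j ≤ i → x j = x' j)
    (hsum : Tsum r x = Tsum r x')
    (s : ℕ) (hs1 : 1 ≤ s) (hs2 : s ≤ i + 1) :
    Lsum r c x s = Lsum r c x' s := by
  have key : (∑ j ∈ Finset.Icc s r, x j) = ∑ j ∈ Finset.Icc s r, x' j := by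
    have e1 := Icc_sum_split r x s hs1 (by omega)
    have e2 := Icc_sum_split r x' s hs1 (by omega)
    have e3 : (∑ j ∈ Finset.Ico 1 s, x j) = ∑ j ∈ Finset.Ico 1 s, x' j := by
      apply Finset.sum_congr rfl
      intro j hj
      rw [Finset.mem_Ico] at hj
      exact hagree j hj.1 (by omega)
    unfold Tsum at hsum
    linarith
  unfold Lsum
  rw [Finset.sum_sub_distrib, Finset.sum_sub_distrib, key]

lemma caseA (x : ℕ → ℤ) (c G dd : ℤ) (k i : ℕ) (hG : 1 ≤ G)
    (hdd : 8 * dd = 2 * G * (2 * (k : ℤ) + 1))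
    (hi1 : 1 ≤ i) (hi2 : 2 * i < 2 * k + 1)
    (hbal : ∀ j, i < j → j ≤ 2 * k + 1 → 8 * (x i - x j) ≤ G ∧ 8 * (x j - x i) ≤ G)
    (hA : -G < 8 * (c - x i)) (s : ℕ) (hs1 : i < s) (hs2 : s ≤ 2 * k + 1) :
    0 < dd + Lsum (2 * k + 1) c x s := by
  have hlb : ((Finset.Icc s (2*k+1)).card) • ((8:ℤ) * (c - x i) - G)
      ≤ ∑ j ∈ Finset.Icc s (2*k+1), (8 * (c - x j)) := by
    apply Finset.card_nsmul_le_sum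
    intro j hj
    rw [Finset.mem_Icc] at hj
    have hb := (hbal j (by omega) hj.2).2
    linarith
  have hcard : (((Finset.Icc s (2*k+1)).card : ℕ) : ℤ) = 2 * (k:ℤ) + 2 - s := by
    rw [Nat.card_Icc]; omega
  rw [nsmul_eq_mul, hcard] at hlb
  have h8L : (∑ j ∈ Finset.Icc s (2*k+1), (8 * (c - x j))) = 8 * Lsum (2*k+1) c x s := by
    unfold Lsum; rw [Finset.mul_sum]
  rw [h8L] at hlb
  have hM1 : (0:ℤ) ≤ 2 * (k:ℤ) + 2 - s := by omega
  have hM2 : 2 * (k:ℤ) + 2 - s ≤ 2 * k := by omega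
  set M : ℤ := 2 * (k:ℤ) + 2 - s with hM_def
  set E : ℤ := 8 * (c - x i) - G with hE_def
  have hE : 1 - 2*G ≤ E := by simp only [hE_def]; linarith
  have hkey : 0 < 2 * G * (2 * (k:ℤ) + 1) + M * E := by
    rcases le_or_gt 0 E with hE0 | hE0
    · have : 0 ≤ M * E := mul_nonneg hM1 hE0
      nlinarith
    · have h4 : 2 * (k:ℤ) * E ≤ M * E := mul_le_mul_of_nonpos_right hM2 hE0.le
      have h5 : 2 * (k:ℤ) * (1 - 2*G) ≤ 2 * (k:ℤ) * E := by
        apply mul_le_mul_of_nonneg_left hE (by positivity)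
      nlinarith
  linarith

lemma caseB_chain (x : ℕ → ℤ) (c G : ℤ) (k i : ℕ) (hG : 0 ≤ G)
    (hbal : ∀ j, i < j → j ≤ 2 * k + 1 → 8 * (x i - x j) ≤ G ∧ 8 * (x j - x i) ≤ G)
    (hB : 8 * (c - x i) ≤ -G)
    (s' s : ℕ) (h1 : i ≤ s') (h2 : s' ≤ s) (h3 : s ≤ 2 * k + 2) :
    Lsum (2*k+1) c x s' ≤ Lsum (2*k+1) c x s := by
  rw [Lsum_split (2*k+1) c x s' s h2 h3]
  have hnp : (∑ j ∈ Finset.Ico s' s, (c - x j)) ≤ 0 := by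
    apply Finset.sum_nonpos
    intro j hj
    rw [Finset.mem_Ico] at hj
    rcases eq_or_lt_of_le (h1.trans hj.1) with h | h
    · rw [← h]; linarith
    · have hb := (hbal j h (by omega)).1
      linarith
  linarith

lemma caseA5 (x : ℕ → ℤ) (c G G₁ : ℤ) (k i : ℕ) (hG : G = 4 * G₁)
    (hi2 : 2 * i < 2 * k + 1)
    (hbal : ∀ j, i < j → j ≤ 2 * k + 1 → 8 * (x i - x j) ≤ G ∧ 8 * (x j - x i) ≤ G)
    (hA : -5 * G ≤ 8 * (c - x i)) :
    0 ≤ (c - x (2*k+1)) + 3 * G₁ := by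
  have hb := (hbal (2*k+1) (by omega) le_rfl).2
  linarith

lemma caseB5 (x : ℕ → ℤ) (c G G₁ dd : ℤ) (k i s' : ℕ) (hG : G = 4 * G₁) (hGpos : 0 ≤ G)
    (hdd : 8 * dd = 2 * G * (2 * (k : ℤ) + 1)) (hk : 1 ≤ k)
    (hi1 : 1 ≤ i) (hi2 : 2 * i < 2 * k + 1) (h1 : i ≤ s') (h2 : s' ≤ i + 1)
    (hbal : ∀ j, i < j → j ≤ 2 * k + 1 → 8 * (x i - x j) ≤ G ∧ 8 * (x j - x i) ≤ G)
    (hB : 8 * (c - x i) ≤ -5 * G) :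
    dd + Lsum (2*k+1) c x s' ≤ (c - x (2*k+1)) + 3 * G₁ := by
  have hsplit : Lsum (2*k+1) c x s' = (∑ j ∈ Finset.Icc s' (2*k), (c - x j)) + (c - x (2*k+1)) := by
    unfold Lsum
    rw [show 2*k+1 = (2*k)+1 from rfl, Finset.sum_Icc_succ_top (by omega : s' ≤ 2*k+1)]
  have hub : (∑ j ∈ Finset.Icc s' (2*k), (8 * (c - x j)))
      ≤ ((Finset.Icc s' (2*k)).card) • (-4 * G) := by
    apply Finset.sum_le_card_nsmul
    intro j hj
    rw [Finset.mem_Icc] at hj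
    rcases eq_or_lt_of_le (h1.trans hj.1) with h | h
    · rw [← h]; linarith
    · have hb := (hbal j h (by omega)).1
      linarith
  have hcard : (((Finset.Icc s' (2*k)).card : ℕ) : ℤ) = 2 * (k:ℤ) + 1 - s' := by
    rw [Nat.card_Icc]; omega
  rw [nsmul_eq_mul, hcard] at hub
  have h8L : (∑ j ∈ Finset.Icc s' (2*k), (8 * (c - x j)))
      = 8 * ∑ j ∈ Finset.Icc s' (2*k), (c - x j) := by rw [Finset.mul_sum]
  rw [h8L] at hub
  have hM : (k:ℤ) ≤ 2 * (k:ℤ) + 1 - s' := by omega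
  nlinarith [mul_nonneg hGpos (by linarith : (0:ℤ) ≤ (2 * (k:ℤ) + 1 - s') - k)]

lemma min_glue {A B : Finset ℤ} (hA : A.Nonempty) (hB : B.Nonempty)
    (h1 : ∀ a ∈ A, ∃ b ∈ B, b ≤ a) (h2 : ∀ b ∈ B, ∃ a ∈ A, a ≤ b) :
    A.min' hA = B.min' hB := by
  apply le_antisymm
  · obtain ⟨a, haA, ha⟩ := h2 (B.min' hB) (B.min'_mem hB)
    exact le_trans (A.min'_le a haA) ha
  · obtain ⟨b, hbB, hb⟩ := h1 (A.min' hA) (A.min'_mem hA)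
    exact le_trans (B.min'_le b hbB) hb

section Dominate
variable (x x' : ℕ → ℤ) (c G G₁ dd : ℤ) (k i : ℕ)

lemma odd_dominate (Fx Fx' : ℕ → ℤ)
    (hG : 1 ≤ G) (hdd : 8 * dd = 2 * G * (2 * (k : ℤ) + 1)) (hk : 1 ≤ k)
    (hi1 : 1 ≤ i) (hi2 : 2 * i < 2 * k + 1)
    (hbal : ∀ j, i < j → j ≤ 2*k+1 → 8 * (x i - x j) ≤ G ∧ 8 * (x j - x i) ≤ G)
    (hagree : ∀ j, 1 ≤ j → j ≤ i → x j = x' j)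
    (hsum : Tsum (2*k+1) x = Tsum (2*k+1) x')
    (hFx : ∀ t, 1 ≤ t → t ≤ k+1 → Fx t = Tsum (2*k+1) x + dd + Lsum (2*k+1) c x (2*t-1))
    (hFx' : ∀ t, 1 ≤ t → t ≤ k+1 → Fx' t = Tsum (2*k+1) x' + dd + Lsum (2*k+1) c x' (2*t-1))
    (hFxtop : Fx (k+2) = Tsum (2*k+1) x) (hFx'top : Fx' (k+2) = Tsum (2*k+1) x') :
    ∀ t, 1 ≤ t → t ≤ k+2 → ∃ t', 1 ≤ t' ∧ t' ≤ k+2 ∧ Fx' t' ≤ Fx t := by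
  intro t ht1 ht2
  rcases eq_or_lt_of_le ht2 with rfl | hlt
  · exact ⟨k+2, by omega, le_rfl, by rw [hFx'top, hFxtop, hsum]⟩
  have ht2' : t ≤ k + 1 := by omega
  by_cases hsi : 2*t-1 ≤ i
  · refine ⟨t, ht1, by omega, ?_⟩
    rw [hFx' t ht1 ht2', hFx t ht1 ht2', hsum,
      Lsum_det x x' c (2*k+1) i (by omega) hagree hsum (2*t-1) (by omega) (by omega)]
  · push_neg at hsi
    rcases lt_or_ge (-G) (8 * (c - x i)) with hA | hB
    · refine ⟨k+2, by omega, le_rfl, ?_⟩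
      rw [hFx'top, ← hsum, hFx t ht1 ht2']
      have := caseA x c G dd k i hG hdd hi1 hi2 hbal hA (2*t-1) (by omega) (by omega)
      linarith
    · refine ⟨i/2+1, by omega, by omega, ?_⟩
      rw [hFx' (i/2+1) (by omega) (by omega), hFx t ht1 ht2', ← hsum,
        ← Lsum_det x x' c (2*k+1) i (by omega) hagree hsum (2*(i/2+1)-1) (by omega) (by omega)]
      have := caseB_chain x c G k i (by linarith) hbal hB (2*(i/2+1)-1) (2*t-1)
        (by omega) (by omega) (by omega)
      linarith

lemma even_dominate (Fx Fx' : ℕ → ℤ)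
    (hG : 1 ≤ G) (hdd : 8 * dd = 2 * G * (2 * (k : ℤ) + 1)) (hk : 1 ≤ k)
    (hi1 : 1 ≤ i) (hi2 : 2 * i < 2 * k + 1)
    (hbal : ∀ j, i < j → j ≤ 2*k+1 → 8 * (x i - x j) ≤ G ∧ 8 * (x j - x i) ≤ G)
    (hagree : ∀ j, 1 ≤ j → j ≤ i → x j = x' j)
    (hsum : Tsum (2*k+1) x = Tsum (2*k+1) x')
    (hFx : ∀ t, 2 ≤ t → t ≤ k+1 → Fx t = Tsum (2*k+1) x + dd + Lsum (2*k+1) c x (2*t-2))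
    (hFx' : ∀ t, 2 ≤ t → t ≤ k+1 → Fx' t = Tsum (2*k+1) x' + dd + Lsum (2*k+1) c x' (2*t-2))
    (hF1 : Fx 1 = Fx' 1)
    (hFxtop : Fx (k+2) = Tsum (2*k+1) x) (hFx'top : Fx' (k+2) = Tsum (2*k+1) x') :
    ∀ t, 1 ≤ t → t ≤ k+2 → ∃ t', 1 ≤ t' ∧ t' ≤ k+2 ∧ Fx' t' ≤ Fx t := by
  intro t ht1 ht2
  by_cases h1 : t = 1
  · subst h1
    exact ⟨1, le_rfl, by omega, le_of_eq hF1.symm⟩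
  have ht1' : 2 ≤ t := by omega
  rcases eq_or_lt_of_le ht2 with rfl | hlt
  · exact ⟨k+2, by omega, le_rfl, by rw [hFx'top, hFxtop, hsum]⟩
  have ht2' : t ≤ k + 1 := by omega
  by_cases hsi : 2*t-2 ≤ i
  · refine ⟨t, ht1, by omega, ?_⟩
    rw [hFx' t ht1' ht2', hFx t ht1' ht2', hsum,
      Lsum_det x x' c (2*k+1) i (by omega) hagree hsum (2*t-2) (by omega) (by omega)]
  · push_neg at hsi
    rcases lt_or_ge (-G) (8 * (c - x i)) with hA | hB
    · refine ⟨k+2, by omega, le_rfl, ?_⟩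
      rw [hFx'top, ← hsum, hFx t ht1' ht2']
      have := caseA x c G dd k i hG hdd hi1 hi2 hbal hA (2*t-2) (by omega) (by omega)
      linarith
    · refine ⟨(i+1)/2+1, by omega, by omega, ?_⟩
      rw [hFx' ((i+1)/2+1) (by omega) (by omega), hFx t ht1' ht2', ← hsum,
        ← Lsum_det x x' c (2*k+1) i (by omega) hagree hsum (2*((i+1)/2+1)-2) (by omega) (by omega)]
      have := caseB_chain x c G k i (by linarith) hbal hB (2*((i+1)/2+1)-2) (2*t-2)
        (by omega) (by omega) (by omega)
      linarith

/-- `M'_even` vs `M_even` on the same signature. -/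
lemma evenp_glue (Fx Fpx : ℕ → ℤ)
    (hG : 1 ≤ G) (hGG : G = 4 * G₁) (hdd : 8 * dd = 2 * G * (2 * (k : ℤ) + 1)) (hk : 1 ≤ k)
    (hi1 : 1 ≤ i) (hi2 : 2 * i < 2 * k + 1)
    (hbal : ∀ j, i < j → j ≤ 2*k+1 → 8 * (x i - x j) ≤ G ∧ 8 * (x j - x i) ≤ G)
    (hFx : ∀ t, 2 ≤ t → t ≤ k+1 → Fx t = Tsum (2*k+1) x + dd + Lsum (2*k+1) c x (2*t-2))
    (hFpx : ∀ t, 2 ≤ t → t ≤ k+1 → Fpx t = Tsum (2*k+1) x + dd + Lsum (2*k+1) c x (2*t-2))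
    (hF1 : Fx 1 = Fpx 1)
    (hFxtop : Fx (k+2) = Tsum (2*k+1) x)
    (hFpk2 : Fpx (k+2) = Tsum (2*k+1) x + (c - x (2*k+1)) + 3 * G₁)
    (hFptop : Fpx (k+3) = Tsum (2*k+1) x) :
    (∀ t, 1 ≤ t → t ≤ k+3 → ∃ t', 1 ≤ t' ∧ t' ≤ k+2 ∧ Fx t' ≤ Fpx t) ∧
    (∀ t, 1 ≤ t → t ≤ k+2 → ∃ t', 1 ≤ t' ∧ t' ≤ k+3 ∧ Fpx t' ≤ Fx t) := by
  constructor
  · intro t ht1 ht2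
    by_cases h1 : t = 1
    · subst h1; exact ⟨1, le_rfl, by omega, le_of_eq hF1⟩
    by_cases htop : t = k+3
    · subst htop; exact ⟨k+2, by omega, le_rfl, le_of_eq (by rw [hFptop, hFxtop])⟩
    by_cases hk2 : t = k+2
    · subst hk2
      rcases lt_or_ge (8 * (c - x i)) (-5 * G) with hB | hA
      · refine ⟨(i+1)/2+1, by omega, by omega, ?_⟩
        rw [hFx ((i+1)/2+1) (by omega) (by omega), hFpk2]
        have := caseB5 x c G G₁ dd k i (2*((i+1)/2+1)-2) hGG (by linarith) hdd hk
          hi1 hi2 (by omega) (by omega) hbal (by linarith)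
        linarith
      · refine ⟨k+2, by omega, le_rfl, ?_⟩
        rw [hFxtop, hFpk2]
        have := caseA5 x c G G₁ k i hGG hi2 hbal hA
        linarith
    · have h2 : 2 ≤ t ∧ t ≤ k+1 := by omega
      exact ⟨t, by omega, by omega, le_of_eq (by rw [hFx t h2.1 h2.2, hFpx t h2.1 h2.2])⟩
  · intro t ht1 ht2
    by_cases h1 : t = 1
    · subst h1; exact ⟨1, le_rfl, by omega, le_of_eq hF1.symm⟩
    by_cases htop : t = k+2
    · subst htop; exact ⟨k+3, by omega, le_rfl, le_of_eq (by rw [hFptop, hFxtop])⟩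
    · have h2 : 2 ≤ t ∧ t ≤ k+1 := by omega
      exact ⟨t, by omega, by omega, le_of_eq (by rw [hFpx t h2.1 h2.2, hFx t h2.1 h2.2])⟩

end Dominate

section Inst
variable {α : Type*} [DecidableEq α] (P : ℕ → Finset α) (n g k : ℕ) (S : Finset α)

lemma odd_inst (hk : 1 ≤ k)
    (hdisj : ∀ i ∈ Finset.Icc 1 (2 * k + 1), ∀ j ∈ Finset.Icc 1 (2 * k + 1),
        i ≠ j → Disjoint (P i) (P j))
    (c dd : ℤ)
    (htau1 : ∀ j, j ≠ 2*k+1 → tauF n g k j = c)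
    (htau2 : tauF n g k (2*k+1) = c + dd) :
    (∀ t, 1 ≤ t → t ≤ k+1 →
      Fval (k+1) (soddF n g k) (fun s => ((S ∩ QoddF P k s).card : ℤ)) t
        = Tsum (2*k+1) (sigF P S) + dd + Lsum (2*k+1) c (sigF P S) (2*t-1)) ∧
    (Fval (k+1) (soddF n g k) (fun s => ((S ∩ QoddF P k s).card : ℤ)) (k+2)
        = Tsum (2*k+1) (sigF P S)) := by
  set x := sigF P S with hx
  set a : ℕ → ℤ := fun s => ((S ∩ QoddF P k s).card : ℤ) with ha
  have ha1 : ∀ s, 1 ≤ s → s ≤ k → a s = x (2*s-1) + x (2*s) := by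
    intro s h1 h2
    have hdPP : Disjoint (P (2*s-1)) (P (2*s)) :=
      hdisj _ (Finset.mem_Icc.mpr (by omega)) _ (Finset.mem_Icc.mpr (by omega)) (by omega)
    simp only [ha, hx, QoddF, if_pos h2, sigF]
    rw [Finset.inter_union_distrib_left, Finset.card_union_of_disjoint
      (Finset.disjoint_of_subset_left Finset.inter_subset_right
        (Finset.disjoint_of_subset_right Finset.inter_subset_right hdPP))]
    push_cast
    ring
  have ha2 : a (k+1) = x (2*k+1) := by
    simp only [ha, hx, QoddF, if_neg (by omega : ¬ (k+1 ≤ k)), sigF]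
  have hpre : ∀ t, 1 ≤ t → t ≤ k+1 →
      (∑ s ∈ Finset.Ico 1 t, a s) = ∑ j ∈ Finset.Ico 1 (2*t-1), x j := by
    intro t
    induction t with
    | zero => omega
    | succ t ih =>
      intro h1 h2
      rcases Nat.eq_or_lt_of_le h1 with h | h
      · rw [← h]; simp
      · have ht1 : 1 ≤ t := by omega
        have ht2 : t ≤ k := by omega
        rw [Finset.sum_Ico_succ_top ht1, ih ht1 (by omega), ha1 t ht1 ht2,
          show 2*(t+1)-1 = ((2*t-1)+1)+1 from by omega,
          Finset.sum_Ico_succ_top (by omega), Finset.sum_Ico_succ_top (by omega),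
          show (2*t-1)+1 = 2*t from by omega]
        ring
  have hpretop : (∑ s ∈ Finset.Ico 1 (k+2), a s) = Tsum (2*k+1) x := by
    rw [Finset.sum_Ico_succ_top (by omega : 1 ≤ k+1), hpre (k+1) (by omega) le_rfl, ha2]
    unfold Tsum
    rw [← Finset.Ico_add_one_right_eq_Icc, show (2*k+1)+1 = (2*(k+1)-1)+1 from by omega,
      Finset.sum_Ico_succ_top (by omega), show 2*(k+1)-1 = 2*k+1 from by omega]
  have hsig : ∀ t, 1 ≤ t → t ≤ k+1 →
      (∑ s ∈ Finset.Icc t (k+1), soddF n g k s) = (2*((k:ℤ)+1-(t:ℤ))+1)*c + dd := by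
    intro t h1 h2
    rw [Finset.sum_Icc_succ_top h2]
    have hmid : ∀ s ∈ Finset.Icc t k, soddF n g k s = 2*c := by
      intro s hs
      rw [Finset.mem_Icc] at hs
      simp only [soddF, if_pos hs.2]
      rw [htau1 _ (by omega), htau1 _ (by omega)]
      ring
    rw [Finset.sum_congr rfl hmid, Finset.sum_const, Nat.card_Icc, nsmul_eq_mul]
    have hlast : soddF n g k (k+1) = c + dd := by
      simp only [soddF, if_neg (by omega : ¬ (k+1 ≤ k))]
      exact htau2
    rw [hlast]
    have hcast : ((k + 1 - t : ℕ) : ℤ) = (k:ℤ) + 1 - t := by omega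
    rw [hcast]; ring
  constructor
  · intro t h1 h2
    unfold Fval
    rw [hpre t h1 h2, hsig t h1 h2]
    have e1 := Icc_sum_split (2*k+1) x (2*t-1) (by omega) (by omega)
    have e2 : Lsum (2*k+1) c x (2*t-1)
        = (((Finset.Icc (2*t-1) (2*k+1)).card : ℕ) : ℤ) * c
          - ∑ j ∈ Finset.Icc (2*t-1) (2*k+1), x j := by
      unfold Lsum
      rw [Finset.sum_sub_distrib, Finset.sum_const, nsmul_eq_mul]
    have e3 : (((Finset.Icc (2*t-1) (2*k+1)).card : ℕ) : ℤ) = 2*(k:ℤ) + 3 - 2*(t:ℤ) := by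
      rw [Nat.card_Icc]; omega
    rw [e2, e3]
    unfold Tsum at e1 ⊢
    have hcast2 : ((2*t-1 : ℕ) : ℤ) = 2*(t:ℤ)-1 := by omega
    nlinarith [e1]
  · unfold Fval
    rw [hpretop, Finset.Icc_eq_empty (by omega : ¬ (k+2 ≤ k+1)), Finset.sum_empty, add_zero]
end Inst

section Inst2
variable {α : Type*} [DecidableEq α] (P : ℕ → Finset α) (n g k : ℕ) (S : Finset α)

lemma even_inst (hk : 1 ≤ k)
    (hdisj : ∀ i ∈ Finset.Icc 1 (2 * k + 1), ∀ j ∈ Finset.Icc 1 (2 * k + 1),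
        i ≠ j → Disjoint (P i) (P j))
    (c dd : ℤ)
    (htau1 : ∀ j, j ≠ 2*k+1 → tauF n g k j = c)
    (htau2 : tauF n g k (2*k+1) = c + dd) :
    (∀ t, 2 ≤ t → t ≤ k+1 →
      Fval (k+1) (sevenF n g k) (fun s => ((S ∩ QevenF P k s).card : ℤ)) t
        = Tsum (2*k+1) (sigF P S) + dd + Lsum (2*k+1) c (sigF P S) (2*t-2)) ∧
    (Fval (k+1) (sevenF n g k) (fun s => ((S ∩ QevenF P k s).card : ℤ)) 1
        = (n:ℤ) + 2*(k:ℤ)*c + dd) ∧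
    (Fval (k+1) (sevenF n g k) (fun s => ((S ∩ QevenF P k s).card : ℤ)) (k+2)
        = Tsum (2*k+1) (sigF P S)) := by
  set x := sigF P S with hx
  set a : ℕ → ℤ := fun s => ((S ∩ QevenF P k s).card : ℤ) with ha
  have ha1 : ∀ s, 2 ≤ s → s ≤ k+1 → a s = x (2*s-2) + x (2*s-1) := by
    intro s h1 h2
    have hdPP : Disjoint (P (2*s-2)) (P (2*s-1)) :=
      hdisj _ (Finset.mem_Icc.mpr (by omega)) _ (Finset.mem_Icc.mpr (by omega)) (by omega)
    simp only [ha, hx, QevenF, if_neg (by omega : ¬ s = 1), sigF]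
    rw [Finset.inter_union_distrib_left, Finset.card_union_of_disjoint
      (Finset.disjoint_of_subset_left Finset.inter_subset_right
        (Finset.disjoint_of_subset_right Finset.inter_subset_right hdPP))]
    push_cast
    ring
  have ha0 : a 1 = x 1 := by
    have hq : QevenF P k 1 = P 1 := by unfold QevenF; rw [if_pos rfl]
    simp only [ha, hx, sigF, hq]
  have hpre : ∀ t, 2 ≤ t → t ≤ k+2 →
      (∑ s ∈ Finset.Ico 1 t, a s) = ∑ j ∈ Finset.Ico 1 (2*t-2), x j := by
    intro t
    induction t with
    | zero => omega
    | succ t ih =>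
      intro h1 h2
      rcases Nat.eq_or_lt_of_le h1 with h | h
      · rw [← h, show Finset.Ico 1 2 = {1} from rfl]
        simp [ha0]
      · have ht1 : 2 ≤ t := by omega
        have ht2 : t ≤ k+1 := by omega
        rw [Finset.sum_Ico_succ_top (by omega : 1 ≤ t), ih ht1 (by omega), ha1 t ht1 ht2,
          show 2*(t+1)-2 = ((2*t-2)+1)+1 from by omega,
          Finset.sum_Ico_succ_top (by omega), Finset.sum_Ico_succ_top (by omega),
          show (2*t-2)+1 = 2*t-1 from by omega]
        ring
  have hpretop : (∑ s ∈ Finset.Ico 1 (k+2), a s) = Tsum (2*k+1) x := by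
    rw [hpre (k+2) (by omega) le_rfl]
    unfold Tsum
    rw [← Finset.Ico_add_one_right_eq_Icc, show (2*k+1)+1 = 2*(k+2)-2 from by omega]
  have hsig : ∀ t, 2 ≤ t → t ≤ k+1 →
      (∑ s ∈ Finset.Icc t (k+1), sevenF n g k s) = (2*((k:ℤ)+1-(t:ℤ))+2)*c + dd := by
    intro t h1 h2
    rw [Finset.sum_Icc_succ_top h2]
    have hmid : ∀ s ∈ Finset.Icc t k, sevenF n g k s = 2*c := by
      intro s hs
      rw [Finset.mem_Icc] at hs
      simp only [sevenF, if_neg (by omega : ¬ s = 1)]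
      rw [htau1 _ (by omega), htau1 _ (by omega)]
      ring
    rw [Finset.sum_congr rfl hmid, Finset.sum_const, Nat.card_Icc, nsmul_eq_mul]
    have hlast : sevenF n g k (k+1) = 2*c + dd := by
      simp only [sevenF, if_neg (by omega : ¬ k+1 = 1)]
      rw [show 2*(k+1)-2 = 2*k from by omega, show 2*(k+1)-1 = 2*k+1 from by omega,
        htau1 _ (by omega), htau2]
      ring
    rw [hlast]
    have hcast : ((k + 1 - t : ℕ) : ℤ) = (k:ℤ) + 1 - t := by omega
    rw [hcast]; ring
  have hsig1 : (∑ s ∈ Finset.Icc 1 (k+1), sevenF n g k s) = (n:ℤ) + 2*(k:ℤ)*c + dd := by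
    have e0 : Finset.Icc 1 (k+1) = Finset.Ico 1 (k+1+1) := by rw [Finset.Ico_add_one_right_eq_Icc]
    have e1 : Finset.Ico (1+1) (k+1+1) = Finset.Icc 2 (k+1) := by
      rw [Finset.Ico_add_one_right_eq_Icc]
    rw [e0, Finset.sum_eq_sum_Ico_succ_bot (by omega), e1, hsig 2 le_rfl (by omega)]
    have h1 : sevenF n g k 1 = (n:ℤ) := by unfold sevenF; rw [if_pos rfl]
    rw [h1]; ring
  refine ⟨?_, ?_, ?_⟩
  · intro t h1 h2
    unfold Fval
    rw [hpre t h1 (by omega), hsig t h1 h2]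
    have e1 := Icc_sum_split (2*k+1) x (2*t-2) (by omega) (by omega)
    have e2 : Lsum (2*k+1) c x (2*t-2)
        = (((Finset.Icc (2*t-2) (2*k+1)).card : ℕ) : ℤ) * c
          - ∑ j ∈ Finset.Icc (2*t-2) (2*k+1), x j := by
      unfold Lsum
      rw [Finset.sum_sub_distrib, Finset.sum_const, nsmul_eq_mul]
    have e3 : (((Finset.Icc (2*t-2) (2*k+1)).card : ℕ) : ℤ) = 2*(k:ℤ) + 4 - 2*(t:ℤ) := by
      rw [Nat.card_Icc]; omega
    rw [e2, e3]
    unfold Tsum at e1 ⊢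
    nlinarith [e1]
  · unfold Fval
    rw [Finset.Ico_self, Finset.sum_empty, hsig1]
    ring
  · unfold Fval
    rw [hpretop, Finset.Icc_eq_empty (by omega : ¬ (k+2 ≤ k+1)), Finset.sum_empty, add_zero]

lemma evenp_inst (hk : 1 ≤ k)
    (hdisj : ∀ i ∈ Finset.Icc 1 (2 * k + 1), ∀ j ∈ Finset.Icc 1 (2 * k + 1),
        i ≠ j → Disjoint (P i) (P j))
    (c dd G₁ : ℤ)
    (htau1 : ∀ j, j ≠ 2*k+1 → tauF n g k j = c)
    (htau2 : tauF n g k (2*k+1) = c + dd)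
    (hth : thetaF n g = c + 3*G₁) :
    (∀ t, 2 ≤ t → t ≤ k+1 →
      Fval (k+2) (sevenF' n g k) (fun s => ((S ∩ QevenF' P k s).card : ℤ)) t
        = Tsum (2*k+1) (sigF P S) + dd + Lsum (2*k+1) c (sigF P S) (2*t-2)) ∧
    (Fval (k+2) (sevenF' n g k) (fun s => ((S ∩ QevenF' P k s).card : ℤ)) 1
        = (n:ℤ) + 2*(k:ℤ)*c + dd) ∧
    (Fval (k+2) (sevenF' n g k) (fun s => ((S ∩ QevenF' P k s).card : ℤ)) (k+2)
        = Tsum (2*k+1) (sigF P S) + (c - sigF P S (2*k+1)) + 3*G₁) ∧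
    (Fval (k+2) (sevenF' n g k) (fun s => ((S ∩ QevenF' P k s).card : ℤ)) (k+3)
        = Tsum (2*k+1) (sigF P S)) := by
  set x := sigF P S with hx
  set a : ℕ → ℤ := fun s => ((S ∩ QevenF' P k s).card : ℤ) with ha
  have ha1 : ∀ s, 2 ≤ s → s ≤ k → a s = x (2*s-2) + x (2*s-1) := by
    intro s h1 h2
    have hdPP : Disjoint (P (2*s-2)) (P (2*s-1)) :=
      hdisj _ (Finset.mem_Icc.mpr (by omega)) _ (Finset.mem_Icc.mpr (by omega)) (by omega)
    simp only [ha, hx, QevenF', if_neg (by omega : ¬ s = 1), if_pos h2, sigF]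
    rw [Finset.inter_union_distrib_left, Finset.card_union_of_disjoint
      (Finset.disjoint_of_subset_left Finset.inter_subset_right
        (Finset.disjoint_of_subset_right Finset.inter_subset_right hdPP))]
    push_cast
    ring
  have ha0 : a 1 = x 1 := by
    have hq : QevenF' P k 1 = P 1 := by unfold QevenF'; rw [if_pos rfl]
    simp only [ha, hx, sigF, hq]
  have hak1 : a (k+1) = x (2*k) := by
    have hq : QevenF' P k (k+1) = P (2*k) := by
      unfold QevenF'
      rw [if_neg (by omega : ¬ k+1 = 1), if_neg (by omega : ¬ k+1 ≤ k), if_pos rfl]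
    simp only [ha, hx, sigF, hq]
  have hak2 : a (k+2) = x (2*k+1) := by
    have hq : QevenF' P k (k+2) = P (2*k+1) := by
      unfold QevenF'
      rw [if_neg (by omega : ¬ k+2 = 1), if_neg (by omega : ¬ k+2 ≤ k),
        if_neg (by omega : ¬ k+2 = k+1)]
    simp only [ha, hx, sigF, hq]
  have hpre : ∀ t, 2 ≤ t → t ≤ k+1 →
      (∑ s ∈ Finset.Ico 1 t, a s) = ∑ j ∈ Finset.Ico 1 (2*t-2), x j := by
    intro t
    induction t with
    | zero => omega
    | succ t ih =>
      intro h1 h2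
      rcases Nat.eq_or_lt_of_le h1 with h | h
      · rw [← h, show Finset.Ico 1 2 = {1} from rfl]
        simp [ha0]
      · have ht1 : 2 ≤ t := by omega
        have ht2 : t ≤ k := by omega
        rw [Finset.sum_Ico_succ_top (by omega : 1 ≤ t), ih ht1 (by omega), ha1 t ht1 ht2,
          show 2*(t+1)-2 = ((2*t-2)+1)+1 from by omega,
          Finset.sum_Ico_succ_top (by omega), Finset.sum_Ico_succ_top (by omega),
          show (2*t-2)+1 = 2*t-1 from by omega]
        ring
  have hprek2 : (∑ s ∈ Finset.Ico 1 (k+2), a s) = ∑ j ∈ Finset.Ico 1 (2*k+1), x j := by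
    rw [Finset.sum_Ico_succ_top (by omega : 1 ≤ k+1), hpre (k+1) (by omega) le_rfl, hak1,
      show (2*k+1) = ((2*(k+1)-2)+1) from by omega, Finset.sum_Ico_succ_top (by omega),
      show 2*(k+1)-2 = 2*k from by omega]
  have hprek3 : (∑ s ∈ Finset.Ico 1 (k+3), a s) = Tsum (2*k+1) x := by
    rw [Finset.sum_Ico_succ_top (by omega : 1 ≤ k+2), hprek2, hak2]
    unfold Tsum
    have e : (∑ j ∈ Finset.Ico 1 ((2*k+1)+1), x j)
        = (∑ j ∈ Finset.Ico 1 (2*k+1), x j) + x (2*k+1) :=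
      Finset.sum_Ico_succ_top (by omega) _
    rw [← Finset.Ico_add_one_right_eq_Icc, e]
  have hsk1 : sevenF' n g k (k+1) = c + dd - 3*G₁ := by
    unfold sevenF'
    rw [if_neg (by omega : ¬ k+1 = 1), if_neg (by omega : ¬ k+1 ≤ k), if_pos rfl,
      htau1 _ (by omega), htau2, hth]
    ring
  have hsk2 : sevenF' n g k (k+2) = c + 3*G₁ := by
    unfold sevenF'
    rw [if_neg (by omega : ¬ k+2 = 1), if_neg (by omega : ¬ k+2 ≤ k),
      if_neg (by omega : ¬ k+2 = k+1)]
    exact hth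
  have hsig : ∀ t, 2 ≤ t → t ≤ k+1 →
      (∑ s ∈ Finset.Icc t (k+2), sevenF' n g k s) = (2*((k:ℤ)+1-(t:ℤ))+2)*c + dd := by
    intro t h1 h2
    rw [Finset.sum_Icc_succ_top (by omega : t ≤ k+2), Finset.sum_Icc_succ_top h2]
    have hmid : ∀ s ∈ Finset.Icc t k, sevenF' n g k s = 2*c := by
      intro s hs
      rw [Finset.mem_Icc] at hs
      simp only [sevenF', if_neg (by omega : ¬ s = 1), if_pos hs.2]
      rw [htau1 _ (by omega), htau1 _ (by omega)]
      ring
    rw [Finset.sum_congr rfl hmid, Finset.sum_const, Nat.card_Icc, nsmul_eq_mul,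
      hsk1, hsk2]
    have hcast : ((k + 1 - t : ℕ) : ℤ) = (k:ℤ) + 1 - t := by omega
    rw [hcast]; ring
  have hsig1 : (∑ s ∈ Finset.Icc 1 (k+2), sevenF' n g k s) = (n:ℤ) + 2*(k:ℤ)*c + dd := by
    have e0 : Finset.Icc 1 (k+2) = Finset.Ico 1 (k+2+1) := by rw [Finset.Ico_add_one_right_eq_Icc]
    have e1 : Finset.Ico (1+1) (k+2+1) = Finset.Icc 2 (k+2) := by
      rw [Finset.Ico_add_one_right_eq_Icc]
    rw [e0, Finset.sum_eq_sum_Ico_succ_bot (by omega), e1]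
    have e2 : (∑ s ∈ Finset.Icc 2 (k+2), sevenF' n g k s) = (2*((k:ℤ)+1-2)+2)*c + dd :=
      hsig 2 le_rfl (by omega)
    rw [e2]
    have h1 : sevenF' n g k 1 = (n:ℤ) := by unfold sevenF'; rw [if_pos rfl]
    rw [h1]; ring
  refine ⟨?_, ?_, ?_, ?_⟩
  · intro t h1 h2
    unfold Fval
    rw [hpre t h1 h2, hsig t h1 h2]
    have e1 := Icc_sum_split (2*k+1) x (2*t-2) (by omega) (by omega)
    have e2 : Lsum (2*k+1) c x (2*t-2)
        = (((Finset.Icc (2*t-2) (2*k+1)).card : ℕ) : ℤ) * c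
          - ∑ j ∈ Finset.Icc (2*t-2) (2*k+1), x j := by
      unfold Lsum
      rw [Finset.sum_sub_distrib, Finset.sum_const, nsmul_eq_mul]
    have e3 : (((Finset.Icc (2*t-2) (2*k+1)).card : ℕ) : ℤ) = 2*(k:ℤ) + 4 - 2*(t:ℤ) := by
      rw [Nat.card_Icc]; omega
    rw [e2, e3]
    unfold Tsum at e1 ⊢
    nlinarith [e1]
  · unfold Fval
    rw [Finset.Ico_self, Finset.sum_empty, hsig1]
    ring
  · unfold Fval
    rw [hprek2, show Finset.Icc (k+2) (k+2) = {k+2} from by rw [Finset.Icc_self],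
      Finset.sum_singleton, hsk2]
    have e1 : Tsum (2*k+1) x = (∑ j ∈ Finset.Ico 1 (2*k+1), x j) + x (2*k+1) := by
      unfold Tsum
      rw [← Finset.Ico_add_one_right_eq_Icc, Finset.sum_Ico_succ_top (by omega)]
    rw [e1]
    ring
  · unfold Fval
    rw [hprek3, Finset.Icc_eq_empty (by omega : ¬ (k+3 ≤ k+2)), Finset.sum_empty, add_zero]
end Inst2

section QFacts
variable {α : Type*} [DecidableEq α] (P : ℕ → Finset α) (n g k : ℕ)

lemma Qodd_disj (hk : 1 ≤ k)
    (hdisj : ∀ i ∈ Finset.Icc 1 (2 * k + 1), ∀ j ∈ Finset.Icc 1 (2 * k + 1),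
        i ≠ j → Disjoint (P i) (P j)) :
    ∀ s ∈ Finset.Icc 1 (k+1), ∀ s' ∈ Finset.Icc 1 (k+1), s ≠ s' →
      Disjoint (QoddF P k s) (QoddF P k s') := by
  have hPd : ∀ a b : ℕ, 1 ≤ a → a ≤ 2*k+1 → 1 ≤ b → b ≤ 2*k+1 → a ≠ b →
      Disjoint (P a) (P b) := fun a b h1 h2 h3 h4 h5 =>
    hdisj a (Finset.mem_Icc.mpr ⟨h1, h2⟩) b (Finset.mem_Icc.mpr ⟨h3, h4⟩) h5
  intro s hs s' hs' hne
  rw [Finset.mem_Icc] at hs hs'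
  unfold QoddF
  split_ifs with h h'
  · exact Finset.disjoint_union_left.mpr
      ⟨Finset.disjoint_union_right.mpr
        ⟨hPd _ _ (by omega) (by omega) (by omega) (by omega) (by omega),
         hPd _ _ (by omega) (by omega) (by omega) (by omega) (by omega)⟩,
       Finset.disjoint_union_right.mpr
        ⟨hPd _ _ (by omega) (by omega) (by omega) (by omega) (by omega),
         hPd _ _ (by omega) (by omega) (by omega) (by omega) (by omega)⟩⟩
  · exact Finset.disjoint_union_left.mpr
      ⟨hPd _ _ (by omega) (by omega) (by omega) (by omega) (by omega),
       hPd _ _ (by omega) (by omega) (by omega) (by omega) (by omega)⟩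
  · exact Finset.disjoint_union_right.mpr
      ⟨hPd _ _ (by omega) (by omega) (by omega) (by omega) (by omega),
       hPd _ _ (by omega) (by omega) (by omega) (by omega) (by omega)⟩
  · omega

lemma Qodd_cover (hk : 1 ≤ k)
    (hcover : ∀ a : α, ∃ i ∈ Finset.Icc 1 (2 * k + 1), a ∈ P i) :
    ∀ a : α, ∃ s ∈ Finset.Icc 1 (k+1), a ∈ QoddF P k s := by
  intro a
  obtain ⟨i, hi, hai⟩ := hcover a
  rw [Finset.mem_Icc] at hi
  by_cases h : i = 2*k+1
  · refine ⟨k+1, Finset.mem_Icc.mpr (by omega), ?_⟩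
    unfold QoddF
    rw [if_neg (by omega : ¬ k+1 ≤ k), ← h]
    exact hai
  · refine ⟨(i+1)/2, Finset.mem_Icc.mpr (by omega), ?_⟩
    unfold QoddF
    rw [if_pos (by omega : (i+1)/2 ≤ k)]
    rcases Nat.even_or_odd i with he | ho
    · apply Finset.mem_union_right
      rw [show 2*((i+1)/2) = i from by rcases he with ⟨w, hw⟩; omega]
      exact hai
    · apply Finset.mem_union_left
      rw [show 2*((i+1)/2)-1 = i from by rcases ho with ⟨w, hw⟩; omega]
      exact hai

lemma Qeven_disj (hk : 1 ≤ k)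
    (hdisj : ∀ i ∈ Finset.Icc 1 (2 * k + 1), ∀ j ∈ Finset.Icc 1 (2 * k + 1),
        i ≠ j → Disjoint (P i) (P j)) :
    ∀ s ∈ Finset.Icc 1 (k+1), ∀ s' ∈ Finset.Icc 1 (k+1), s ≠ s' →
      Disjoint (QevenF P k s) (QevenF P k s') := by
  have hPd : ∀ a b : ℕ, 1 ≤ a → a ≤ 2*k+1 → 1 ≤ b → b ≤ 2*k+1 → a ≠ b →
      Disjoint (P a) (P b) := fun a b h1 h2 h3 h4 h5 =>
    hdisj a (Finset.mem_Icc.mpr ⟨h1, h2⟩) b (Finset.mem_Icc.mpr ⟨h3, h4⟩) h5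
  intro s hs s' hs' hne
  rw [Finset.mem_Icc] at hs hs'
  unfold QevenF
  split_ifs with h h'
  · omega
  · exact Finset.disjoint_union_right.mpr
      ⟨hPd _ _ (by omega) (by omega) (by omega) (by omega) (by omega),
       hPd _ _ (by omega) (by omega) (by omega) (by omega) (by omega)⟩
  · exact Finset.disjoint_union_left.mpr
      ⟨hPd _ _ (by omega) (by omega) (by omega) (by omega) (by omega),
       hPd _ _ (by omega) (by omega) (by omega) (by omega) (by omega)⟩
  · exact Finset.disjoint_union_left.mpr
      ⟨Finset.disjoint_union_right.mpr
        ⟨hPd _ _ (by omega) (by omega) (by omega) (by omega) (by omega),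
         hPd _ _ (by omega) (by omega) (by omega) (by omega) (by omega)⟩,
       Finset.disjoint_union_right.mpr
        ⟨hPd _ _ (by omega) (by omega) (by omega) (by omega) (by omega),
         hPd _ _ (by omega) (by omega) (by omega) (by omega) (by omega)⟩⟩

lemma Qeven_cover (hk : 1 ≤ k)
    (hcover : ∀ a : α, ∃ i ∈ Finset.Icc 1 (2 * k + 1), a ∈ P i) :
    ∀ a : α, ∃ s ∈ Finset.Icc 1 (k+1), a ∈ QevenF P k s := by
  intro a
  obtain ⟨i, hi, hai⟩ := hcover a
  rw [Finset.mem_Icc] at hi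
  by_cases h : i = 1
  · refine ⟨1, Finset.mem_Icc.mpr (by omega), ?_⟩
    unfold QevenF
    rw [if_pos rfl, ← h]
    exact hai
  · refine ⟨i/2+1, Finset.mem_Icc.mpr (by omega), ?_⟩
    unfold QevenF
    rw [if_neg (by omega : ¬ i/2+1 = 1)]
    rcases Nat.even_or_odd i with he | ho
    · apply Finset.mem_union_left
      rw [show 2*(i/2+1)-2 = i from by rcases he with ⟨w, hw⟩; omega]
      exact hai
    · apply Finset.mem_union_right
      rw [show 2*(i/2+1)-1 = i from by rcases ho with ⟨w, hw⟩; omega]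
      exact hai

lemma Qevenp_disj (hk : 1 ≤ k)
    (hdisj : ∀ i ∈ Finset.Icc 1 (2 * k + 1), ∀ j ∈ Finset.Icc 1 (2 * k + 1),
        i ≠ j → Disjoint (P i) (P j)) :
    ∀ s ∈ Finset.Icc 1 (k+2), ∀ s' ∈ Finset.Icc 1 (k+2), s ≠ s' →
      Disjoint (QevenF' P k s) (QevenF' P k s') := by
  have hPd : ∀ a b : ℕ, 1 ≤ a → a ≤ 2*k+1 → 1 ≤ b → b ≤ 2*k+1 → a ≠ b →
      Disjoint (P a) (P b) := fun a b h1 h2 h3 h4 h5 =>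
    hdisj a (Finset.mem_Icc.mpr ⟨h1, h2⟩) b (Finset.mem_Icc.mpr ⟨h3, h4⟩) h5
  intro s hs s' hs' hne
  rw [Finset.mem_Icc] at hs hs'
  unfold QevenF'
  split_ifs with h1 h2 h3 h4 h5 h6 h7 h8 h9 h10 h11 h12 h13 h14 h15 <;>
    first
    | omega
    | (exact hPd _ _ (by omega) (by omega) (by omega) (by omega) (by omega))
    | (exact Finset.disjoint_union_right.mpr
        ⟨hPd _ _ (by omega) (by omega) (by omega) (by omega) (by omega),
         hPd _ _ (by omega) (by omega) (by omega) (by omega) (by omega)⟩)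
    | (exact Finset.disjoint_union_left.mpr
        ⟨hPd _ _ (by omega) (by omega) (by omega) (by omega) (by omega),
         hPd _ _ (by omega) (by omega) (by omega) (by omega) (by omega)⟩)
    | (exact Finset.disjoint_union_left.mpr
        ⟨Finset.disjoint_union_right.mpr
          ⟨hPd _ _ (by omega) (by omega) (by omega) (by omega) (by omega),
           hPd _ _ (by omega) (by omega) (by omega) (by omega) (by omega)⟩,
         Finset.disjoint_union_right.mpr
          ⟨hPd _ _ (by omega) (by omega) (by omega) (by omega) (by omega),
           hPd _ _ (by omega) (by omega) (by omega) (by omega) (by omega)⟩⟩)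

lemma Qevenp_cover (hk : 1 ≤ k)
    (hcover : ∀ a : α, ∃ i ∈ Finset.Icc 1 (2 * k + 1), a ∈ P i) :
    ∀ a : α, ∃ s ∈ Finset.Icc 1 (k+2), a ∈ QevenF' P k s := by
  intro a
  obtain ⟨i, hi, hai⟩ := hcover a
  rw [Finset.mem_Icc] at hi
  by_cases h : i = 1
  · refine ⟨1, Finset.mem_Icc.mpr (by omega), ?_⟩
    unfold QevenF'
    rw [if_pos rfl, ← h]
    exact hai
  by_cases h2 : i = 2*k
  · refine ⟨k+1, Finset.mem_Icc.mpr (by omega), ?_⟩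
    unfold QevenF'
    rw [if_neg (by omega : ¬ k+1 = 1), if_neg (by omega : ¬ k+1 ≤ k), if_pos rfl, ← h2]
    exact hai
  by_cases h3 : i = 2*k+1
  · refine ⟨k+2, Finset.mem_Icc.mpr (by omega), ?_⟩
    unfold QevenF'
    rw [if_neg (by omega : ¬ k+2 = 1), if_neg (by omega : ¬ k+2 ≤ k),
      if_neg (by omega : ¬ k+2 = k+1), ← h3]
    exact hai
  · refine ⟨i/2+1, Finset.mem_Icc.mpr (by omega), ?_⟩
    unfold QevenF'
    rw [if_neg (by omega : ¬ i/2+1 = 1), if_pos (by omega : i/2+1 ≤ k)]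
    rcases Nat.even_or_odd i with he | ho
    · apply Finset.mem_union_left
      rw [show 2*(i/2+1)-2 = i from by rcases he with ⟨w, hw⟩; omega]
      exact hai
    · apply Finset.mem_union_right
      rw [show 2*(i/2+1)-1 = i from by rcases ho with ⟨w, hw⟩; omega]
      exact hai
end QFacts

/-- For `1 ≤ i < r/2` (`r = 2k+1`), if `S, S' ⊆ U` have `i`-balanced
signatures agreeing on the first `i` coordinates and with equal coordinate sums, then
their ranks agree in `M_odd`, and their ranks in `M_even` and `M'_even` all coincide. -/
theorem rank_suffix_indistinguishability
    {α : Type*} [Fintype α] [DecidableEq α]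
    (n g k : ℕ) (hk : 1 ≤ k) (hn : 0 < n) (hn2 : 2 ∣ n) (hg : 0 < g) (hg4 : 4 ∣ g)
    (hgrn : 5 * g * (2 * k + 1) ≤ n)
    (P : ℕ → Finset α)
    (hdisj : ∀ i ∈ Finset.Icc 1 (2 * k + 1), ∀ j ∈ Finset.Icc 1 (2 * k + 1),
        i ≠ j → Disjoint (P i) (P j))
    (hcover : ∀ a : α, ∃ i ∈ Finset.Icc 1 (2 * k + 1), a ∈ P i)
    (hcard : ∀ i ∈ Finset.Icc 1 (2 * k + 1), (P i).card = n)
    (i : ℕ) (hi1 : 1 ≤ i) (hi2 : 2 * i < 2 * k + 1)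
    (S S' : Finset α)
    (hbal : iBal g (2 * k + 1) i (sigF P S))
    (hbal' : iBal g (2 * k + 1) i (sigF P S'))
    (hagree : ∀ j ∈ Finset.Icc 1 i, sigF P S j = sigF P S' j)
    (hsum : ∑ j ∈ Finset.Icc 1 (2 * k + 1), sigF P S j
        = ∑ j ∈ Finset.Icc 1 (2 * k + 1), sigF P S' j) :
    nrank (NIndep (k + 1) (QoddF P k) (soddF n g k)) S
      = nrank (NIndep (k + 1) (QoddF P k) (soddF n g k)) S' ∧
    nrank (NIndep (k + 1) (QevenF P k) (sevenF n g k)) S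
      = nrank (NIndep (k + 1) (QevenF P k) (sevenF n g k)) S' ∧
    nrank (NIndep (k + 1) (QevenF P k) (sevenF n g k)) S
      = nrank (NIndep (k + 2) (QevenF' P k) (sevenF' n g k)) S ∧
    nrank (NIndep (k + 2) (QevenF' P k) (sevenF' n g k)) S
      = nrank (NIndep (k + 2) (QevenF' P k) (sevenF' n g k)) S' := by
  classical
  obtain ⟨n₂, hn₂⟩ := hn2
  obtain ⟨g₁, hg₁⟩ := hg4
  set c : ℤ := (n:ℤ)/2 - g with hc_def
  set G₁ : ℤ := (g₁:ℤ) with hG₁_def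
  set dd : ℤ := G₁ * (2*(k:ℤ)+1) with hdd_def
  have hgz : (g:ℤ) = 4*G₁ := by rw [hG₁_def, hg₁]; push_cast; ring
  have hg4div : ((g:ℤ) * (2*(k:ℤ)+1))/4 = dd := by
    rw [hgz, show (4*G₁)*(2*(k:ℤ)+1) = 4*(G₁*(2*(k:ℤ)+1)) from by ring,
      Int.mul_ediv_cancel_left _ (by norm_num)]
  have htau1 : ∀ j, j ≠ 2*k+1 → tauF n g k j = c := by
    intro j hj; unfold tauF; rw [if_neg hj]
  have htau2 : tauF n g k (2*k+1) = c + dd := by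
    unfold tauF; rw [if_pos rfl, hg4div]
  have hth : thetaF n g = c + 3*G₁ := by
    unfold thetaF
    have h4 : (g:ℤ)/4 = G₁ := by
      rw [hgz]; exact Int.mul_ediv_cancel_left _ (by norm_num)
    rw [h4, hc_def, hgz]; ring
  have hG1 : 1 ≤ (g:ℤ) := by exact_mod_cast hg
  have hdd8 : 8*dd = 2*(g:ℤ)*(2*(k:ℤ)+1) := by rw [hgz, hdd_def]; ring
  have hng : 2*g ≤ n := by nlinarith
  have hc0 : 0 ≤ c := by rw [hc_def]; omega
  have hG₁0 : 0 ≤ G₁ := by rw [hG₁_def]; positivity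
  have hdd0 : 0 ≤ dd := by
    rw [hdd_def]; apply mul_nonneg hG₁0; positivity
  have hdd3 : 3*G₁ ≤ dd := by
    rw [hdd_def]
    nlinarith [mul_nonneg hG₁0 (show (0:ℤ) ≤ 2*(k:ℤ)-2 from by omega)]
  have htnn : ∀ j, 0 ≤ tauF n g k j := by
    intro j
    by_cases hj : j = 2*k+1
    · rw [hj, htau2]; linarith
    · rw [htau1 j hj]; exact hc0
  -- nonnegativity of the threshold functions
  have hsodd_nn : ∀ s, 1 ≤ s → s ≤ k+1 → 0 ≤ soddF n g k s := by
    intro s h1 h2; unfold soddF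
    split_ifs with h
    · exact add_nonneg (htnn _) (htnn _)
    · exact htnn _
  have hseven_nn : ∀ s, 1 ≤ s → s ≤ k+1 → 0 ≤ sevenF n g k s := by
    intro s h1 h2; unfold sevenF
    split_ifs with h
    · positivity
    · exact add_nonneg (htnn _) (htnn _)
  have hsevenp_nn : ∀ s, 1 ≤ s → s ≤ k+2 → 0 ≤ sevenF' n g k s := by
    intro s h1 h2; unfold sevenF'
    split_ifs with h h3 h4
    · positivity
    · exact add_nonneg (htnn _) (htnn _)
    · rw [htau1 _ (by omega), htau2, hth]; linarith
    · rw [hth]; linarith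
  -- signatures
  set x : ℕ → ℤ := sigF P S with hx_def
  set x' : ℕ → ℤ := sigF P S' with hx'_def
  have hbalx : ∀ j, i < j → j ≤ 2*k+1 → 8 * (x i - x j) ≤ (g:ℤ) ∧ 8 * (x j - x i) ≤ (g:ℤ) :=
    fun j h1 h2 => hbal j h1 h2
  have hbalx' : ∀ j, i < j → j ≤ 2*k+1 → 8 * (x' i - x' j) ≤ (g:ℤ) ∧ 8 * (x' j - x' i) ≤ (g:ℤ) :=
    fun j h1 h2 => hbal' j h1 h2
  have hagx : ∀ j, 1 ≤ j → j ≤ i → x j = x' j :=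
    fun j h1 h2 => hagree j (Finset.mem_Icc.mpr ⟨h1, h2⟩)
  have hagx' : ∀ j, 1 ≤ j → j ≤ i → x' j = x j := fun j h1 h2 => (hagx j h1 h2).symm
  have hsumx : Tsum (2*k+1) x = Tsum (2*k+1) x' := hsum
  have hsumx' : Tsum (2*k+1) x' = Tsum (2*k+1) x := hsumx.symm
  -- rank formulas
  have hrankodd : ∀ T : Finset α,
      nrank (NIndep (k+1) (QoddF P k) (soddF n g k)) T
      = (((Finset.Icc 1 (k+2)).image
          (Fval (k+1) (soddF n g k) (fun s => ((T ∩ QoddF P k s).card : ℤ)))).min'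
            ((Finset.nonempty_Icc.mpr (by omega)).image _)).toNat := by
    intro T
    exact nrank_eq_min (k+1) (by omega) _ _ T (Qodd_disj P k hk hdisj)
      (fun a _ => Qodd_cover P k hk hcover a) (fun s h1 h2 => hsodd_nn s h1 h2)
  have hrankeven : ∀ T : Finset α,
      nrank (NIndep (k+1) (QevenF P k) (sevenF n g k)) T
      = (((Finset.Icc 1 (k+2)).image
          (Fval (k+1) (sevenF n g k) (fun s => ((T ∩ QevenF P k s).card : ℤ)))).min'
            ((Finset.nonempty_Icc.mpr (by omega)).image _)).toNat := by
    intro T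
    exact nrank_eq_min (k+1) (by omega) _ _ T (Qeven_disj P k hk hdisj)
      (fun a _ => Qeven_cover P k hk hcover a) (fun s h1 h2 => hseven_nn s h1 h2)
  have hrankevenp : ∀ T : Finset α,
      nrank (NIndep (k+2) (QevenF' P k) (sevenF' n g k)) T
      = (((Finset.Icc 1 (k+3)).image
          (Fval (k+2) (sevenF' n g k) (fun s => ((T ∩ QevenF' P k s).card : ℤ)))).min'
            ((Finset.nonempty_Icc.mpr (by omega)).image _)).toNat := by
    intro T
    exact nrank_eq_min (k+2) (by omega) _ _ T (Qevenp_disj P k hk hdisj)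
      (fun a _ => Qevenp_cover P k hk hcover a) (fun s h1 h2 => hsevenp_nn s h1 h2)
  -- F formula packages
  obtain ⟨hFoS, hFoStop⟩ := odd_inst P n g k S hk hdisj c dd htau1 htau2
  obtain ⟨hFoS', hFoS'top⟩ := odd_inst P n g k S' hk hdisj c dd htau1 htau2
  obtain ⟨hFeS, hFeS1, hFeStop⟩ := even_inst P n g k S hk hdisj c dd htau1 htau2
  obtain ⟨hFeS', hFeS'1, hFeS'top⟩ := even_inst P n g k S' hk hdisj c dd htau1 htau2
  obtain ⟨hFpS, hFpS1, hFpSk2, hFpStop⟩ := evenp_inst P n g k S hk hdisj c dd G₁ htau1 htau2 hth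
  obtain ⟨hFpS', hFpS'1, hFpS'k2, hFpS'top⟩ := evenp_inst P n g k S' hk hdisj c dd G₁ htau1 htau2 hth
  -- abbreviations for the F functions
  set FoS := Fval (k+1) (soddF n g k) (fun s => ((S ∩ QoddF P k s).card : ℤ)) with hFoS_def
  set FoS' := Fval (k+1) (soddF n g k) (fun s => ((S' ∩ QoddF P k s).card : ℤ)) with hFoS'_def
  set FeS := Fval (k+1) (sevenF n g k) (fun s => ((S ∩ QevenF P k s).card : ℤ)) with hFeS_def
  set FeS' := Fval (k+1) (sevenF n g k) (fun s => ((S' ∩ QevenF P k s).card : ℤ)) with hFeS'_def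
  set FpS := Fval (k+2) (sevenF' n g k) (fun s => ((S ∩ QevenF' P k s).card : ℤ)) with hFpS_def
  set FpS' := Fval (k+2) (sevenF' n g k) (fun s => ((S' ∩ QevenF' P k s).card : ℤ)) with hFpS'_def
  -- (a) odd ranks agree
  have hodd : nrank (NIndep (k+1) (QoddF P k) (soddF n g k)) S
      = nrank (NIndep (k+1) (QoddF P k) (soddF n g k)) S' := by
    rw [hrankodd S, hrankodd S']
    apply congrArg Int.toNat
    apply min_glue
    · intro b hb
      obtain ⟨t, ht, rfl⟩ := Finset.mem_image.mp hb
      rw [Finset.mem_Icc] at ht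
      obtain ⟨t', h1, h2, h3⟩ := odd_dominate x x' c (g:ℤ) dd k i FoS FoS' hG1 hdd8 hk
        hi1 hi2 hbalx hagx hsumx hFoS hFoS' hFoStop hFoS'top t ht.1 ht.2
      exact ⟨FoS' t', Finset.mem_image_of_mem _ (Finset.mem_Icc.mpr ⟨h1, h2⟩), h3⟩
    · intro b hb
      obtain ⟨t, ht, rfl⟩ := Finset.mem_image.mp hb
      rw [Finset.mem_Icc] at ht
      obtain ⟨t', h1, h2, h3⟩ := odd_dominate x' x c (g:ℤ) dd k i FoS' FoS hG1 hdd8 hk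
        hi1 hi2 hbalx' hagx' hsumx' hFoS' hFoS hFoS'top hFoStop t ht.1 ht.2
      exact ⟨FoS t', Finset.mem_image_of_mem _ (Finset.mem_Icc.mpr ⟨h1, h2⟩), h3⟩
  -- (b1) even ranks agree
  have hF1eq : FeS 1 = FeS' 1 := by rw [hFeS1, hFeS'1]
  have heven : nrank (NIndep (k+1) (QevenF P k) (sevenF n g k)) S
      = nrank (NIndep (k+1) (QevenF P k) (sevenF n g k)) S' := by
    rw [hrankeven S, hrankeven S']
    apply congrArg Int.toNat
    apply min_glue
    · intro b hb
      obtain ⟨t, ht, rfl⟩ := Finset.mem_image.mp hb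
      rw [Finset.mem_Icc] at ht
      obtain ⟨t', h1, h2, h3⟩ := even_dominate x x' c (g:ℤ) dd k i FeS FeS' hG1 hdd8 hk
        hi1 hi2 hbalx hagx hsumx hFeS hFeS' hF1eq hFeStop hFeS'top t ht.1 ht.2
      exact ⟨FeS' t', Finset.mem_image_of_mem _ (Finset.mem_Icc.mpr ⟨h1, h2⟩), h3⟩
    · intro b hb
      obtain ⟨t, ht, rfl⟩ := Finset.mem_image.mp hb
      rw [Finset.mem_Icc] at ht
      obtain ⟨t', h1, h2, h3⟩ := even_dominate x' x c (g:ℤ) dd k i FeS' FeS hG1 hdd8 hk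
        hi1 hi2 hbalx' hagx' hsumx' hFeS' hFeS hF1eq.symm hFeS'top hFeStop t ht.1 ht.2
      exact ⟨FeS t', Finset.mem_image_of_mem _ (Finset.mem_Icc.mpr ⟨h1, h2⟩), h3⟩
  -- (b2) even vs even' for a single set
  have hevenp : ∀ (T : Finset α) (xT : ℕ → ℤ), xT = sigF P T →
      (∀ j, i < j → j ≤ 2*k+1 → 8 * (xT i - xT j) ≤ (g:ℤ) ∧ 8 * (xT j - xT i) ≤ (g:ℤ)) →
      (∀ t, 2 ≤ t → t ≤ k+1 →
        Fval (k+1) (sevenF n g k) (fun s => ((T ∩ QevenF P k s).card : ℤ)) t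
          = Tsum (2*k+1) xT + dd + Lsum (2*k+1) c xT (2*t-2)) →
      (Fval (k+1) (sevenF n g k) (fun s => ((T ∩ QevenF P k s).card : ℤ)) 1
          = (n:ℤ) + 2*(k:ℤ)*c + dd) →
      (Fval (k+1) (sevenF n g k) (fun s => ((T ∩ QevenF P k s).card : ℤ)) (k+2)
          = Tsum (2*k+1) xT) →
      (∀ t, 2 ≤ t → t ≤ k+1 →
        Fval (k+2) (sevenF' n g k) (fun s => ((T ∩ QevenF' P k s).card : ℤ)) t
          = Tsum (2*k+1) xT + dd + Lsum (2*k+1) c xT (2*t-2)) →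
      (Fval (k+2) (sevenF' n g k) (fun s => ((T ∩ QevenF' P k s).card : ℤ)) 1
          = (n:ℤ) + 2*(k:ℤ)*c + dd) →
      (Fval (k+2) (sevenF' n g k) (fun s => ((T ∩ QevenF' P k s).card : ℤ)) (k+2)
          = Tsum (2*k+1) xT + (c - xT (2*k+1)) + 3*G₁) →
      (Fval (k+2) (sevenF' n g k) (fun s => ((T ∩ QevenF' P k s).card : ℤ)) (k+3)
          = Tsum (2*k+1) xT) →
      nrank (NIndep (k+1) (QevenF P k) (sevenF n g k)) T
        = nrank (NIndep (k+2) (QevenF' P k) (sevenF' n g k)) T := by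
    intro T xT hxT hbalT hFe hFe1 hFetop hFp hFp1 hFpk2 hFptop
    rw [hrankeven T, hrankevenp T]
    apply congrArg Int.toNat
    obtain ⟨hglue1, hglue2⟩ := evenp_glue xT c (g:ℤ) G₁ dd k i
      (Fval (k+1) (sevenF n g k) (fun s => ((T ∩ QevenF P k s).card : ℤ)))
      (Fval (k+2) (sevenF' n g k) (fun s => ((T ∩ QevenF' P k s).card : ℤ)))
      hG1 hgz hdd8 hk hi1 hi2 hbalT hFe hFp (by rw [hFe1, hFp1]) hFetop hFpk2 hFptop
    apply min_glue
    · intro b hb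
      obtain ⟨t, ht, rfl⟩ := Finset.mem_image.mp hb
      rw [Finset.mem_Icc] at ht
      obtain ⟨t', h1, h2, h3⟩ := hglue2 t ht.1 ht.2
      exact ⟨_, Finset.mem_image_of_mem _ (Finset.mem_Icc.mpr ⟨h1, h2⟩), h3⟩
    · intro b hb
      obtain ⟨t, ht, rfl⟩ := Finset.mem_image.mp hb
      rw [Finset.mem_Icc] at ht
      obtain ⟨t', h1, h2, h3⟩ := hglue1 t ht.1 ht.2
      exact ⟨_, Finset.mem_image_of_mem _ (Finset.mem_Icc.mpr ⟨h1, h2⟩), h3⟩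
  have hevenpS := hevenp S x hx_def hbalx hFeS hFeS1 hFeStop hFpS hFpS1 hFpSk2 hFpStop
  have hevenpS' := hevenp S' x' hx'_def hbalx' hFeS' hFeS'1 hFeS'top hFpS' hFpS'1 hFpS'k2 hFpS'top
  exact ⟨hodd, heven, hevenpS, by rw [← hevenpS, ← hevenpS', heven]⟩
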